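/- Define the Bessel kernel J_s(x,y) = (√x·J_{s+1}(√x)·J_s(√y) − √y·J_{s+1}(√y)·J_s(√x)) / (2(x−y)) for x ≠ y, x,y > 0. Then J_s(x,y) = J_{s+2}(x,y) + ((s+1)/√(xy))·J_{s+1}(√x)·J_{s+1}(√y). -/

import Mathlib

/-- The Bessel function of the first kind of real order `s`, defined by its
power series. -/
noncomputable def besselJ (s x : ℝ) : ℝ :=
  ∑' m : ℕ, ((-1 : ℝ) ^ m / (m.factorial * Real.Gamma ((m : ℝ) + s + 1)))
      * (x / 2) ^ (2 * m) * (x / 2) ^ s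

/-- The Bessel kernel
`J_s(x,y) = (√x J_{s+1}(√x) J_s(√y) − √y J_{s+1}(√y) J_s(√x)) / (2(x−y))`. -/
noncomputable def besselKernel (s x y : ℝ) : ℝ :=
  (Real.sqrt x * besselJ (s + 1) (Real.sqrt x) * besselJ s (Real.sqrt y)
      - Real.sqrt y * besselJ (s + 1) (Real.sqrt y) * besselJ s (Real.sqrt x))
    / (2 * (x - y))

noncomputable def besselTerm (s w : ℝ) (m : ℕ) : ℝ :=
  ((-1 : ℝ) ^ m / (m.factorial * Real.Gamma ((m : ℝ) + s + 1))) * w ^ m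

lemma gamma_div (t : ℝ) : t / Real.Gamma (t + 1) = 1 / Real.Gamma t := by
  rcases eq_or_ne t 0 with h | h
  · simp [h, Real.Gamma_zero]
  · rw [Real.Gamma_add_one h]
    rcases eq_or_ne (Real.Gamma t) 0 with h0 | h0
    · simp [h0]
    · field_simp

lemma besselTerm_summable (s w : ℝ) : Summable (besselTerm s w) := by
  apply Summable.of_norm_bounded_eventually_nat
    (Real.summable_pow_div_factorial |w|)
  filter_upwards [Filter.eventually_ge_atTop ⌈(1 : ℝ) - s⌉₊] with m hm
  have hm' : (1 : ℝ) - s ≤ m := le_trans (Nat.le_ceil _) (by exact_mod_cast hm)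
  have h2 : (2 : ℝ) ≤ (m : ℝ) + s + 1 := by linarith
  have hg : (1 : ℝ) ≤ Real.Gamma ((m : ℝ) + s + 1) := by
    calc (1 : ℝ) = Real.Gamma 2 := Real.Gamma_two.symm
    _ ≤ Real.Gamma ((m : ℝ) + s + 1) :=
      Real.Gamma_strictMonoOn_Ici.monotoneOn (by norm_num) h2 h2
  have hgpos : (0 : ℝ) < Real.Gamma ((m : ℝ) + s + 1) := lt_of_lt_of_le one_pos hg
  have hfac : (0 : ℝ) < (m.factorial : ℝ) := by positivity
  rw [besselTerm, norm_mul, norm_div, norm_pow, norm_neg, norm_one, one_pow, norm_pow]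
  rw [Real.norm_eq_abs, Real.norm_eq_abs, abs_of_pos (mul_pos hfac hgpos)]
  have h1 : (1 : ℝ) / ((m.factorial : ℝ) * Real.Gamma ((m : ℝ) + s + 1))
      ≤ 1 / (m.factorial : ℝ) :=
    one_div_le_one_div_of_le hfac (le_mul_of_one_le_right hfac.le hg)
  calc 1 / ((m.factorial : ℝ) * Real.Gamma ((m : ℝ) + s + 1)) * |w| ^ m
      ≤ 1 / (m.factorial : ℝ) * |w| ^ m := mul_le_mul_of_nonneg_right h1 (by positivity)
  _ = |w| ^ m / (m.factorial : ℝ) := by ring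

lemma besselJ_eq (s z : ℝ) :
    besselJ s z = (∑' m, besselTerm s ((z / 2) ^ 2) m) * (z / 2) ^ s := by
  unfold besselJ besselTerm
  rw [← tsum_mul_right]
  congr 1 with m
  rw [← pow_mul]

noncomputable def besselShift (s w : ℝ) : ℕ → ℝ
  | 0 => 0
  | (k + 1) => w * besselTerm s w k

lemma besselShift_summable (s w : ℝ) : Summable (besselShift s w) := by
  rw [← summable_nat_add_iff 1]
  exact ((besselTerm_summable s w).mul_left w).congr (fun n => rfl)

lemma besselShift_tsum (s w : ℝ) :
    ∑' m, besselShift s w m = w * ∑' m, besselTerm s w m := by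
  rw [Summable.tsum_eq_zero_add (besselShift_summable s w)]
  simp [besselShift, tsum_mul_left]

lemma bessel_key (s w : ℝ) (m : ℕ) :
    (s + 1) * besselTerm (s + 1) w m = besselTerm s w m + besselShift (s + 2) w m := by
  cases m with
  | zero =>
      simp only [besselShift, besselTerm, Nat.cast_zero, Nat.factorial_zero, Nat.cast_one,
        pow_zero, mul_one, one_mul, zero_add, add_zero]
      rw [← gamma_div (s + 1)]
      ring
  | succ k =>
      simp only [besselShift, besselTerm]
      have hfac : ((k + 1).factorial : ℝ) = ((k : ℝ) + 1) * k.factorial := by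
        rw [Nat.factorial_succ]; push_cast; ring
      have hk1 : ((k : ℝ) + 1) ≠ 0 := by positivity
      have hfk : ((k.factorial : ℝ)) ≠ 0 := by positivity
      have e1 : ((k : ℝ) + 1) + (s + 1) + 1 = (k : ℝ) + s + 2 + 1 := by ring
      have e2 : ((k : ℝ) + 1) + s + 1 = (k : ℝ) + s + 2 := by ring
      have e3 : (k : ℝ) + (s + 2) + 1 = (k : ℝ) + s + 2 + 1 := by ring
      push_cast
      rw [e1, e2, e3, hfac, pow_succ, pow_succ]
      rcases eq_or_ne ((k : ℝ) + s + 2) 0 with hk0 | hne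
      · have g2 : Real.Gamma ((k : ℝ) + s + 2) = 0 := by rw [hk0]; exact Real.Gamma_zero
        have g1 : Real.Gamma ((k : ℝ) + s + 2 + 1) = 1 := by
          rw [hk0, zero_add, Real.Gamma_one]
        have hs1 : s + 1 = -((k : ℝ) + 1) := by linarith
        rw [g1, g2, hs1, mul_zero, div_zero]
        field_simp
        ring
      · have hG1 : Real.Gamma ((k : ℝ) + s + 2 + 1)
            = ((k : ℝ) + s + 2) * Real.Gamma ((k : ℝ) + s + 2) := Real.Gamma_add_one hne
        rw [hG1]
        rcases eq_or_ne (Real.Gamma ((k : ℝ) + s + 2)) 0 with h0 | h0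
        · rw [h0]
          simp
        · field_simp
          ring

lemma besselJ_recurrence (s z : ℝ) (hz : 0 < z) :
    besselJ s z + besselJ (s + 2) z = (2 * (s + 1) / z) * besselJ (s + 1) z := by
  have hz2 : (0 : ℝ) < z / 2 := by linarith
  have hcs1 : (z / 2) ^ (s + 1) = (z / 2) ^ s * (z / 2) := by
    rw [Real.rpow_add hz2, Real.rpow_one]
  have hcs2 : (z / 2) ^ (s + 2) = (z / 2) ^ s * (z / 2) ^ (2 : ℕ) := by
    rw [Real.rpow_add hz2, ← Real.rpow_natCast (z / 2) 2]
    norm_num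
  have hsum : (s + 1) * ∑' m, besselTerm (s + 1) ((z / 2) ^ 2) m
      = (∑' m, besselTerm s ((z / 2) ^ 2) m)
        + (z / 2) ^ 2 * ∑' m, besselTerm (s + 2) ((z / 2) ^ 2) m := by
    rw [← tsum_mul_left]
    calc ∑' m, (s + 1) * besselTerm (s + 1) ((z / 2) ^ 2) m
        = ∑' m, (besselTerm s ((z / 2) ^ 2) m + besselShift (s + 2) ((z / 2) ^ 2) m) :=
          tsum_congr (bessel_key s ((z / 2) ^ 2))
      _ = (∑' m, besselTerm s ((z / 2) ^ 2) m)
            + ∑' m, besselShift (s + 2) ((z / 2) ^ 2) m :=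
          Summable.tsum_add (besselTerm_summable s _) (besselShift_summable _ _)
      _ = (∑' m, besselTerm s ((z / 2) ^ 2) m)
            + (z / 2) ^ 2 * ∑' m, besselTerm (s + 2) ((z / 2) ^ 2) m := by
          rw [besselShift_tsum]
  rw [besselJ_eq s z, besselJ_eq (s + 1) z, besselJ_eq (s + 2) z, hcs1, hcs2]
  have hzne : z ≠ 0 := ne_of_gt hz
  have h24 : (2 * (s + 1) / z) * ((∑' m, besselTerm (s + 1) ((z / 2) ^ 2) m)
        * ((z / 2) ^ s * (z / 2)))
      = ((s + 1) * ∑' m, besselTerm (s + 1) ((z / 2) ^ 2) m) * (z / 2) ^ s := by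
    field_simp
  rw [h24, hsum]
  ring

theorem besselKernel_recurrence (s x y : ℝ) (hx : 0 < x) (hy : 0 < y) (hxy : x ≠ y) :
    besselKernel s x y = besselKernel (s + 2) x y
      + ((s + 1) / Real.sqrt (x * y)) * besselJ (s + 1) (Real.sqrt x)
          * besselJ (s + 1) (Real.sqrt y) := by
  set a := Real.sqrt x with hadef
  set b := Real.sqrt y with hbdef
  have ha : 0 < a := Real.sqrt_pos.mpr hx
  have hb : 0 < b := Real.sqrt_pos.mpr hy
  have ha2 : a ^ 2 = x := Real.sq_sqrt hx.le
  have hb2 : b ^ 2 = y := Real.sq_sqrt hy.le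
  have hab : Real.sqrt (x * y) = a * b := Real.sqrt_mul hx.le y
  have hxy2 : a ^ 2 - b ^ 2 ≠ 0 := by
    rw [ha2, hb2]; exact sub_ne_zero.mpr hxy
  have h1 := besselJ_recurrence s a ha
  have h3 := besselJ_recurrence s b hb
  have h2 : besselJ (s + 2 + 1) a
      = 2 * (s + 2) / a * besselJ (s + 2) a - besselJ (s + 1) a := by
    have h := besselJ_recurrence (s + 1) a ha
    rw [show s + 1 + 2 = s + 2 + 1 by ring, show s + 1 + 1 = s + 2 by ring] at h
    linarith
  have h4 : besselJ (s + 2 + 1) b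
      = 2 * (s + 2) / b * besselJ (s + 2) b - besselJ (s + 1) b := by
    have h := besselJ_recurrence (s + 1) b hb
    rw [show s + 1 + 2 = s + 2 + 1 by ring, show s + 1 + 1 = s + 2 by ring] at h
    linarith
  have hA : besselJ (s + 2) a = 2 * (s + 1) / a * besselJ (s + 1) a - besselJ s a := by
    linarith
  have hB : besselJ (s + 2) b = 2 * (s + 1) / b * besselJ (s + 1) b - besselJ s b := by
    linarith
  unfold besselKernel
  rw [hab, h2, h4, hA, hB, ← ha2, ← hb2]
  field_simp
  simp only [Real.sqrt_sq ha.le, Real.sqrt_sq hb.le]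
  ring
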